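/- arXiv:2103.06707 — 2 statements merged into one kernel-verified Lean document; each statement's English description precedes it below -/
import Mathlib

section
/- If the constructed parallel token swapping instance has a K-round solution, where K = 8n, then the Star STS instance is a YES instance. -/
namespace ParallelTS

/-!
Construction (parallel): given a Star STS instance with slots `1,…,m` (encoded as
`Fin m`), items `0,…,m` (encoded as `Option (Fin m)`, `none` = item 0), target
permutation `π` and swap sequence `s₁,…,sₙ` (`s : Fin n → Fin m`), set `K = 8n` and
build a subdivided star with root `r` and branches: swap branches `w¹,…,wⁿ`, slot
branches `s¹,…,s^{m+n}` and garbage branches `g`, `g′`, each a path of `K` vertices.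
-/

/-- The branches: swap branches `wᵗ` (`Sum.inl`), slot branches `sⁱ`
(`Sum.inr (Sum.inl _)`), and the garbage branches `g = Sum.inr (Sum.inr false)` and
`g′ = Sum.inr (Sum.inr true)`. -/
abbrev Branch (m n : ℕ) := Fin n ⊕ Fin (m + n) ⊕ Bool

/-- Vertices of the subdivided star: `none` is the root `r`; `some (b, j)` is the
vertex `b_{j+1}` of branch `b` at distance `j+1` from the root.  (The coordinate `j`
ranges over all of `ℕ`; the graph below only has edges between the root and the first
`K` vertices of each branch, so the remaining vertices are isolated and carry no
tokens.) -/
abbrev PV (m n : ℕ) := Option (Branch m n × ℕ)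

/-- Adjacency generator for the subdivided star with branches of length `K = 8n`. -/
def prel {m n : ℕ} : PV m n → PV m n → Prop
  | none, some (_, j) => j = 0 ∧ 0 < 8 * n
  | some (b, j), some (b', j') => b = b' ∧ j' = j + 1 ∧ j' < 8 * n
  | _, _ => False

/-- The subdivided star, as a simple graph. -/
def PGraph (m n : ℕ) : SimpleGraph (PV m n) := SimpleGraph.fromRel prel

/-- Swap the two values `e.1`, `e.2`. -/
def swapV {V : Type*} [DecidableEq V] (e : V × V) (v : V) : V :=
  if v = e.1 then e.2 else if v = e.2 then e.1 else v

/-- Trajectory of the vertex `v` under a schedule of rounds, each round being a list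
of (disjoint) swaps. -/
def applySched {V : Type*} [DecidableEq V] (sched : List (List (V × V))) (v : V) : V :=
  sched.foldl (fun v R => R.foldl (fun v e => swapV e v) v) v

/-- Two swaps do not share a vertex. -/
def NoShare {V : Type*} (e f : V × V) : Prop :=
  e.1 ≠ f.1 ∧ e.1 ≠ f.2 ∧ e.2 ≠ f.1 ∧ e.2 ≠ f.2

/-- Apply a sequence of star swaps (each given by a leaf) to a placement on the star
with center `none` and leaves `some l`. -/
def starApply {L : Type*} [DecidableEq L] (σ : List L) (f : Option L → Option L) :
    Option L → Option L :=
  σ.foldl (fun g l => fun t => swapV ((none : Option L), some l) (g t)) f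

/-- The Star STS instance is a YES instance. -/
def StarSTSYes {L : Type*} [DecidableEq L] (π : Equiv.Perm (Option L)) (σ : List L) : Prop :=
  ∃ σ' : List L, σ'.Sublist σ ∧ starApply σ' id = ⇑π

variable {m n : ℕ}

/-- `a(i,t)`: the index of the slot branch representing slot `i` after `t` steps:
`a(i,0) = i`, and `a(i,t) = a(i,t-1)` for `i ≠ s_t` while `a(s_t,t) = m + t`
(`1`-indexed; below everything is `0`-indexed). -/
def aFun (s : Fin n → Fin m) : ℕ → Fin m → Fin (m + n)
  | 0, i => ⟨i.val, Nat.lt_of_lt_of_le i.isLt (Nat.le_add_right m n)⟩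
  | t + 1, i =>
      if h : t < n then
        (if s ⟨t, h⟩ = i then ⟨m + t, Nat.add_lt_add_left h m⟩ else aFun s t i)
      else aFun s t i

/-- The enforcement tokens are indexed by `(t, r) : Fin n × Fin 4`; the token
`e_{(t,r)}` is `e_d` for the odd number `d = 8t + 2r + 1`. -/
def dOf (t : Fin n) (r : Fin 4) : ℕ := 8 * t.val + 2 * r.val + 1

/-- The starting branch `x^d` of enforcement token `e_d`, `d = 8t+2r+1`:
`x^{8T-7} = x^{8T-5} = w^T`, `x^{8T-3} = g′`, `x^{8T-1} = s^{m+T}` (where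
`T = t+1`). -/
def xB (s : Fin n → Fin m) (t : Fin n) (r : Fin 4) : Branch m n :=
  if r.val ≤ 1 then Sum.inl t
  else if r.val = 2 then Sum.inr (Sum.inr true)
  else Sum.inr (Sum.inl ⟨m + t.val, Nat.add_lt_add_left t.isLt m⟩)

/-- The destination branch `y^d` of enforcement token `e_d`, `d = 8t+2r+1`:
`y^{8T-7} = s^{a(s_T, T-1)}`, `y^{8T-5} = g`, `y^{8T-3} = y^{8T-1} = w^T` (where
`T = t+1`). -/
def yB (s : Fin n → Fin m) (t : Fin n) (r : Fin 4) : Branch m n :=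
  if r.val = 0 then Sum.inr (Sum.inl (aFun s t.val (s t)))
  else if r.val = 1 then Sum.inr (Sum.inr false)
  else Sum.inl t

/-- Initial vertex of item token `o`: the root for item `0`, the vertex `sⁱ₁` for
item `i`. -/
def itemInit (s : Fin n → Fin m) : Option (Fin m) → PV m n
  | none => none
  | some i => some (Sum.inr (Sum.inl (aFun s 0 i)), 0)

/-- Initial vertex of the enforcement token `e_d`, namely `x^d_d`. -/
def enfInit (s : Fin n → Fin m) (t : Fin n) (r : Fin 4) : PV m n :=
  some (xB s t r, dOf t r - 1)

/-- A vertex initially occupied by an item or enforcement token. -/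
def Occupied (s : Fin n → Fin m) (v : PV m n) : Prop :=
  (∃ o : Option (Fin m), itemInit s o = v) ∨
    (∃ tr : Fin n × Fin 4, enfInit s tr.1 tr.2 = v)

/-- The tokens of the parallel instance: item tokens, enforcement tokens, and one
filler token for each initially unoccupied vertex. -/
abbrev PTok (s : Fin n → Fin m) :=
  Option (Fin m) ⊕ (Fin n × Fin 4) ⊕ {v : PV m n // ¬ Occupied s v}

/-- Initial placement of all tokens. -/
def initP (s : Fin n → Fin m) : PTok s → PV m n
  | Sum.inl o => itemInit s o
  | Sum.inr (Sum.inl (t, r)) => enfInit s t r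
  | Sum.inr (Sum.inr v) => v.val

/-- Position of the enforcement token with branches `xb`, `yb` and starting distance
`d` after `τ` rounds of the scaffold solution: it moves one step toward its target in
every round, reaching the root after round `d`. -/
def posE (xb yb : Branch m n) (d τ : ℕ) : PV m n :=
  if τ < d then some (xb, d - τ - 1)
  else if τ = d then none
  else some (yb, τ - d - 1)

/-- The scaffold solution: the `K = 8n`-round schedule whose round `τ+1` swaps each
enforcement token one step along the path toward its target. -/
def scaffold (s : Fin n → Fin m) : List (List (PV m n × PV m n)) :=
  List.ofFn fun τ : Fin (8 * n) =>
    (List.ofFn fun t : Fin n =>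
      List.ofFn fun r : Fin 4 =>
        (posE (xB s t r) (yB s t r) (dOf t r) τ.val,
          posE (xB s t r) (yB s t r) (dOf t r) (τ.val + 1))).flatten

/-- Target placement of all tokens: item token `o` goes to the root if `π o = 0` and
to `s^{a(π o, n)}₁` otherwise; enforcement token `e_d` goes to `y^d_{K-d}`; each
filler token goes to the final vertex of its initial vertex under the scaffold
solution. -/
def tgtP (s : Fin n → Fin m) (π : Equiv.Perm (Option (Fin m))) : PTok s → PV m n
  | Sum.inl o =>
      (match π o with
        | none => none
        | some i => some (Sum.inr (Sum.inl (aFun s n i)), 0))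
  | Sum.inr (Sum.inl (t, r)) => some (yB s t r, 8 * n - dOf t r - 1)
  | Sum.inr (Sum.inr v) => applySched (scaffold s) v.val

/-- `sched` is a solution of the parallel token swapping instance using at most `K`
rounds: at most `K` rounds, every round is a matching of edges of the graph, and the
schedule brings every token from its initial vertex to its target vertex. -/
def IsSolution (s : Fin n → Fin m) (π : Equiv.Perm (Option (Fin m)))
    (K : ℕ) (sched : List (List (PV m n × PV m n))) : Prop :=
  sched.length ≤ K ∧
  (∀ R ∈ sched, (∀ e ∈ R, (PGraph m n).Adj e.1 e.2) ∧ R.Pairwise NoShare) ∧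
  ∀ t : PTok s, applySched sched (initP s t) = tgtP s π t

end ParallelTS

namespace ParallelTS

section Machinery
variable {V : Type*} [DecidableEq V]

/-- One round of swaps. -/
def roundF (R : List (V × V)) (v : V) : V := R.foldl (fun v e => swapV e v) v

lemma swapV_eq_swap (e : V × V) (v : V) : swapV e v = Equiv.swap e.1 e.2 v := by
  rw [Equiv.swap_apply_def]; rfl

lemma swapV_injective (e : V × V) : Function.Injective (swapV e) := by
  intro a b h
  rw [swapV_eq_swap, swapV_eq_swap] at h
  exact (Equiv.swap e.1 e.2).injective h

lemma swapV_of_ne (e : V × V) (v : V) (h1 : v ≠ e.1) (h2 : v ≠ e.2) : swapV e v = v := by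
  simp [swapV, h1, h2]

lemma roundF_cons (e : V × V) (R : List (V × V)) (v : V) :
    roundF (e :: R) v = roundF R (swapV e v) := rfl

lemma roundF_injective (R : List (V × V)) : Function.Injective (roundF R) := by
  induction R with
  | nil => intro a b h; exact h
  | cons e R ih =>
      intro a b h
      rw [roundF_cons, roundF_cons] at h
      exact swapV_injective e (ih h)

lemma roundF_fix (R : List (V × V)) (v : V) (hv : ∀ e ∈ R, v ≠ e.1 ∧ v ≠ e.2) :
    roundF R v = v := by
  induction R with
  | nil => rfl
  | cons e R ih =>
      rw [roundF_cons, swapV_of_ne e v (hv e (by simp)).1 (hv e (by simp)).2]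
      exact ih fun f hf => hv f (by simp [hf])

lemma roundF_pair (R : List (V × V)) (hR : R.Pairwise NoShare) (e : V × V) (he : e ∈ R) :
    roundF R e.1 = e.2 ∧ roundF R e.2 = e.1 := by
  induction R with
  | nil => simp at he
  | cons f R ih =>
      rcases List.mem_cons.1 he with rfl | he'
      · have hns : ∀ g ∈ R, NoShare e g := (List.pairwise_cons.1 hR).1
        constructor
        · rw [roundF_cons]
          have : swapV e e.1 = e.2 := by simp [swapV]
          rw [this]
          exact roundF_fix R e.2 fun g hg => ⟨(hns g hg).2.2.1, (hns g hg).2.2.2⟩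
        · rw [roundF_cons]
          have : swapV e e.2 = e.1 := by
            by_cases h : e.2 = e.1 <;> simp [swapV, h]
          rw [this]
          exact roundF_fix R e.1 fun g hg => ⟨(hns g hg).1, (hns g hg).2.1⟩
      · have hfe : NoShare f e := (List.pairwise_cons.1 hR).1 e he'
        have h1 : swapV f e.1 = e.1 := swapV_of_ne f e.1 (Ne.symm hfe.1) (Ne.symm hfe.2.2.1)
        have h2 : swapV f e.2 = e.2 := swapV_of_ne f e.2 (Ne.symm hfe.2.1) (Ne.symm hfe.2.2.2)
        have ih' := ih (List.pairwise_cons.1 hR).2 he'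
        exact ⟨by rw [roundF_cons, h1]; exact ih'.1, by rw [roundF_cons, h2]; exact ih'.2⟩

lemma roundF_move (R : List (V × V)) (hR : R.Pairwise NoShare) (v : V) :
    roundF R v = v ∨ ∃ e ∈ R, (v = e.1 ∧ roundF R v = e.2) ∨ (v = e.2 ∧ roundF R v = e.1) := by
  by_cases h : ∀ e ∈ R, v ≠ e.1 ∧ v ≠ e.2
  · exact Or.inl (roundF_fix R v h)
  · push_neg at h
    obtain ⟨e, he, hv⟩ := h
    right
    refine ⟨e, he, ?_⟩
    by_cases h1 : v = e.1
    · exact Or.inl ⟨h1, by rw [h1]; exact (roundF_pair R hR e he).1⟩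
    · have h2 : v = e.2 := by tauto
      exact Or.inr ⟨h2, by rw [h2]; exact (roundF_pair R hR e he).2⟩

lemma roundF_swap_back (R : List (V × V)) (hR : R.Pairwise NoShare) (u v : V)
    (hmove : roundF R u = v) (hne : u ≠ v) : roundF R v = u := by
  rcases roundF_move R hR u with h | ⟨e, he, ⟨h1, h2⟩ | ⟨h1, h2⟩⟩
  · exact absurd (h.symm.trans hmove) hne
  · have hv : v = e.2 := by rw [← hmove, h2]
    rw [hv, h1]; exact (roundF_pair R hR e he).2
  · have hv : v = e.1 := by rw [← hmove, h2]
    rw [hv, h1]; exact (roundF_pair R hR e he).1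

end Machinery


section Dist
variable {m n : ℕ}

lemma adj_cases {u v : PV m n} (h : (PGraph m n).Adj u v) :
    (∃ b, u = none ∧ v = some (b, 0) ∨ v = none ∧ u = some (b, 0)) ∨
    ∃ b j, u = some (b, j) ∧ v = some (b, j + 1) ∨ v = some (b, j) ∧ u = some (b, j + 1) := by
  rw [PGraph, SimpleGraph.fromRel_adj] at h
  obtain ⟨hne, h⟩ := h
  rcases u with _ | ⟨b, j⟩ <;> rcases v with _ | ⟨b', j'⟩
  · simp [prel] at h
  · simp only [prel] at h
    replace h : j' = 0 ∧ 0 < 8 * n := by tauto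
    exact Or.inl ⟨b', Or.inl ⟨rfl, by rw [h.1]⟩⟩
  · simp only [prel] at h
    replace h : j = 0 ∧ 0 < 8 * n := by tauto
    exact Or.inl ⟨b, Or.inr ⟨rfl, by rw [h.1]⟩⟩
  · simp only [prel] at h
    rcases h with ⟨rfl, rfl, -⟩ | ⟨rfl, rfl, -⟩
    · exact Or.inr ⟨b, j, Or.inl ⟨rfl, rfl⟩⟩
    · exact Or.inr ⟨b', j', Or.inr ⟨rfl, rfl⟩⟩

def distP : PV m n → PV m n → ℕ
  | none, none => 0
  | none, some (_, j) => j + 1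
  | some (_, j), none => j + 1
  | some (b, j), some (b', j') => if b = b' then (j - j') + (j' - j) else j + j' + 2

@[simp] lemma distP_self (v : PV m n) : distP v v = 0 := by
  rcases v with _ | ⟨b, j⟩ <;> simp [distP]

lemma distP_step {u v : PV m n} (h : (PGraph m n).Adj u v) (w : PV m n) :
    distP u w ≤ distP v w + 1 ∧ distP v w ≤ distP u w + 1 := by
  rcases adj_cases h with ⟨b, ⟨rfl, rfl⟩ | ⟨rfl, rfl⟩⟩ | ⟨b, j, ⟨rfl, rfl⟩ | ⟨rfl, rfl⟩⟩ <;>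
    rcases w with _ | ⟨b', j'⟩ <;> simp only [distP] <;> (try split_ifs) <;> omega

end Dist


section AFun
variable {m n : ℕ} (s : Fin n → Fin m)

lemma aFun_lt (t : ℕ) (i : Fin m) : (aFun s t i).val < m + t := by
  induction t with
  | zero => exact i.isLt
  | succ t ih =>
      rw [aFun]
      split_ifs with h1 h2
      · exact Nat.lt_succ_self _
      · exact Nat.lt_succ_of_lt ih
      · exact Nat.lt_succ_of_lt ih

lemma aFun_inj (t : ℕ) : Function.Injective (aFun s t) := by
  induction t with
  | zero =>
      intro a b h
      rw [aFun, aFun] at h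
      simp only [Fin.mk.injEq] at h
      exact Fin.ext h
  | succ t ih =>
      intro a b h
      by_cases htn : t < n
      · rw [aFun, aFun, dif_pos htn, dif_pos htn] at h
        by_cases ha : s ⟨t, htn⟩ = a <;> by_cases hb : s ⟨t, htn⟩ = b
        · exact ha.symm.trans hb
        · rw [if_pos ha, if_neg hb] at h
          exact absurd (congrArg Fin.val h) (by have := aFun_lt s t b; simp; omega)
        · rw [if_neg ha, if_pos hb] at h
          exact absurd (congrArg Fin.val h).symm (by have := aFun_lt s t a; simp; omega)
        · rw [if_neg ha, if_neg hb] at h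
          exact ih h
      · rw [aFun, aFun, dif_neg htn, dif_neg htn] at h
        exact ih h

lemma aFun_succ_self (t : ℕ) (ht : t < n) :
    aFun s (t + 1) (s ⟨t, ht⟩) = ⟨m + t, by omega⟩ := by
  rw [aFun]; simp [ht]

lemma aFun_succ_other (t : ℕ) (ht : t < n) (i : Fin m) (hi : s ⟨t, ht⟩ ≠ i) :
    aFun s (t + 1) i = aFun s t i := by
  rw [aFun]; simp [ht, hi]

lemma aFun_retire (t : ℕ) (ht : t < n) (t' : ℕ) (h : t < t') (i : Fin m) :
    aFun s t' i ≠ aFun s t (s ⟨t, ht⟩) := by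
  induction t' with
  | zero => omega
  | succ t' ih =>
      rcases Nat.lt_or_ge t t' with hlt | hge
      · intro hc
        rw [aFun] at hc
        split_ifs at hc with h1 h2
        · exact absurd (congrArg Fin.val hc) (by have := aFun_lt s t (s ⟨t, ht⟩); simp; omega)
        · exact ih hlt hc
        · exact ih hlt hc
      · have : t' = t := by omega
        subst this
        intro hc
        rw [aFun] at hc
        split_ifs at hc with h1
        · exact absurd (congrArg Fin.val hc) (by have := aFun_lt s t' (s ⟨t', ht⟩); simp; omega)
        · exact h1 (aFun_inj s t' hc).symm

end AFun

section Dist2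
variable {m n : ℕ}

lemma distP_comm (u v : PV m n) : distP u v = distP v u := by
  rcases u with _ | ⟨b, j⟩ <;> rcases v with _ | ⟨b', j'⟩ <;> simp only [distP]
  by_cases hb : b = b'
  · subst hb; simp; omega
  · rw [if_neg hb, if_neg (Ne.symm hb)]; omega

end Dist2

section Traj
variable {m n : ℕ} (sched : List (List (PV m n × PV m n)))

/-- Position after `τ` rounds of the token that starts at `v`. -/
def Pos (v : PV m n) (τ : ℕ) : PV m n := applySched (sched.take τ) v

@[simp] lemma Pos_zero (v : PV m n) : Pos sched v 0 = v := rfl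

lemma applySched_concat (l : List (List (PV m n × PV m n))) (R : List (PV m n × PV m n))
    (v : PV m n) : applySched (l ++ [R]) v = roundF R (applySched l v) := by
  simp [applySched, List.foldl_append, roundF]

lemma Pos_succ (v : PV m n) (τ : ℕ) (h : τ < sched.length) :
    Pos sched v (τ + 1) = roundF (sched.get ⟨τ, h⟩) (Pos sched v τ) := by
  rw [Pos, Pos, List.take_succ, List.getElem?_eq_getElem h]
  simp only [Option.toList_some, List.get_eq_getElem]
  exact applySched_concat _ _ _

lemma Pos_succ_of_le (v : PV m n) (τ : ℕ) (h : sched.length ≤ τ) :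
    Pos sched v (τ + 1) = Pos sched v τ := by
  rw [Pos, Pos, List.take_of_length_le h, List.take_of_length_le (by omega)]

lemma Pos_injective (τ : ℕ) : Function.Injective (fun v => Pos sched v τ) := by
  unfold Pos applySched
  generalize sched.take τ = l
  induction l with
  | nil => exact fun a b h => h
  | cons R l ih =>
      intro a b h
      simp only [List.foldl_cons] at h
      exact roundF_injective R (ih h)

variable (hmatch : ∀ R ∈ sched, (∀ e ∈ R, (PGraph m n).Adj e.1 e.2) ∧ R.Pairwise NoShare)

include hmatch in
lemma Pos_move (v : PV m n) (τ : ℕ) :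
    Pos sched v (τ + 1) = Pos sched v τ ∨
      (PGraph m n).Adj (Pos sched v τ) (Pos sched v (τ + 1)) := by
  rcases Nat.lt_or_ge τ sched.length with h | h
  · rw [Pos_succ sched v τ h]
    have hm := hmatch (sched.get ⟨τ, h⟩) (sched.get_mem _)
    rcases roundF_move _ hm.2 (Pos sched v τ) with he | ⟨e, he, ⟨h1, h2⟩ | ⟨h1, h2⟩⟩
    · exact Or.inl he
    · right; rw [h2, h1]; exact hm.1 e he
    · right; rw [h2, h1]; exact (hm.1 e he).symm
  · exact Or.inl (Pos_succ_of_le sched v τ h)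

include hmatch in
lemma Pos_dist_le (v : PV m n) (τ : ℕ) : distP v (Pos sched v τ) ≤ τ := by
  induction τ with
  | zero => simp
  | succ τ ih =>
      rcases Pos_move sched hmatch v τ with h | h
      · rw [h]; omega
      · have h2 := (distP_step h v).2
        rw [distP_comm v (Pos sched v (τ+1)), distP_comm v (Pos sched v τ)] at *
        omega

include hmatch in
lemma Pos_dist_down (v : PV m n) (τ₁ τ₂ : ℕ) (h : τ₁ ≤ τ₂) :
    distP (Pos sched v τ₁) (Pos sched v τ₂) ≤ τ₂ - τ₁ := by
  induction τ₂, h using Nat.le_induction with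
  | base => simp
  | succ τ₂ hle ih =>
      rcases Pos_move sched hmatch v τ₂ with h | h
      · rw [h]; omega
      · have h2 := (distP_step h (Pos sched v τ₁)).2
        rw [distP_comm _ (Pos sched v τ₁), distP_comm _ (Pos sched v τ₁)] at h2
        omega

end Traj

section Enf
variable {m n : ℕ} (s : Fin n → Fin m) (π : Equiv.Perm (Option (Fin m)))
  (sched : List (List (PV m n × PV m n)))

lemma distP_tri_special (x y : Branch m n) (hxy : x ≠ y) (d : ℕ) (hd1 : 1 ≤ d)
    (hd2 : d < 8 * n) (p : PV m n) :
    8 * n ≤ distP (some (x, d - 1)) p + distP p (some (y, 8 * n - d - 1)) := by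
  rcases p with _ | ⟨b, c⟩
  · simp only [distP]; omega
  · by_cases hbx : b = x <;> by_cases hby : b = y
    · exact absurd (hbx.symm.trans hby) hxy
    · subst hbx
      rw [distP, distP, if_pos rfl, if_neg hxy]; omega
    · subst hby
      rw [distP, distP, if_neg hxy, if_pos rfl]; omega
    · rw [distP, distP, if_neg (Ne.symm hbx), if_neg hby]; omega

lemma posE_char (x y : Branch m n) (d τ : ℕ) (hxy : x ≠ y) (hd1 : 1 ≤ d)
    (hd2 : d < 8 * n) (hτ : τ ≤ 8 * n) (p : PV m n)
    (ha : distP (some (x, d - 1)) p = τ) (hb : distP p (some (y, 8 * n - d - 1)) = 8 * n - τ) :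
    p = posE x y d τ := by
  rcases p with _ | ⟨b, c⟩
  · rw [distP] at ha
    have : τ = d := by omega
    subst this
    rw [posE, if_neg (by omega), if_pos rfl]
  · by_cases hbx : b = x <;> by_cases hby : b = y
    · exact absurd (hbx.symm.trans hby) hxy
    · subst hbx
      rw [distP, if_pos rfl] at ha
      rw [distP, if_neg hxy] at hb
      have h1 : τ < d ∧ c = d - τ - 1 := by omega
      rw [posE, if_pos h1.1, h1.2]
    · subst hby
      rw [distP, if_neg hxy] at ha
      have h1 : d < τ ∧ c = τ - d - 1 := by omega
      rw [posE, if_neg (by omega), if_neg (by omega), h1.2]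
    · rw [distP, if_neg (Ne.symm hbx)] at ha
      rw [distP, if_neg hby] at hb
      omega

lemma dOf_bounds (t : Fin n) (r : Fin 4) : 1 ≤ dOf t r ∧ dOf t r < 8 * n := by
  have := t.isLt
  have := r.isLt
  unfold dOf
  omega

lemma xB_ne_yB (t : Fin n) (r : Fin 4) : xB s t r ≠ yB s t r := by
  fin_cases r <;> simp [xB, yB]

variable (hsol : IsSolution s π (8 * n) sched)

include hsol in
lemma sched_length (hn : 0 < n) : sched.length = 8 * n := by
  have hmatch := hsol.2.1
  set t : Fin n := ⟨0, hn⟩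
  set r : Fin 4 := ⟨0, by omega⟩
  have hd := dOf_bounds t r
  have hfin : applySched sched (initP s (Sum.inr (Sum.inl (t, r)))) =
      tgtP s π (Sum.inr (Sum.inl (t, r))) := hsol.2.2 _
  have hstart : initP s (Sum.inr (Sum.inl (t, r))) = some (xB s t r, dOf t r - 1) := rfl
  have htgt : tgtP s π (Sum.inr (Sum.inl (t, r))) = some (yB s t r, 8 * n - dOf t r - 1) := rfl
  rw [hstart, htgt] at hfin
  have hL : Pos sched (some (xB s t r, dOf t r - 1)) sched.length =
      some (yB s t r, 8 * n - dOf t r - 1) := by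
    rw [Pos, List.take_length]; exact hfin
  have hup := Pos_dist_le sched hmatch (some (xB s t r, dOf t r - 1)) sched.length
  rw [hL] at hup
  have htri := distP_tri_special (xB s t r) (yB s t r) (xB_ne_yB s t r) (dOf t r) hd.1 hd.2
    (some (yB s t r, 8 * n - dOf t r - 1))
  simp only [distP_self, add_zero] at htri
  have := hsol.1
  omega

include hsol in
lemma e_pos (hn : 0 < n) (t : Fin n) (r : Fin 4) (τ : ℕ) (hτ : τ ≤ 8 * n) :
    Pos sched (enfInit s t r) τ = posE (xB s t r) (yB s t r) (dOf t r) τ := by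
  have hmatch := hsol.2.1
  have hd := dOf_bounds t r
  rw [show enfInit s t r = some (xB s t r, dOf t r - 1) from rfl]
  have hK : Pos sched (some (xB s t r, dOf t r - 1)) (8 * n) =
      some (yB s t r, 8 * n - dOf t r - 1) := by
    rw [Pos, List.take_of_length_le hsol.1]
    exact hsol.2.2 (Sum.inr (Sum.inl (t, r)))
  have hup := Pos_dist_le sched hmatch (some (xB s t r, dOf t r - 1)) τ
  have hdown := Pos_dist_down sched hmatch (some (xB s t r, dOf t r - 1)) τ (8 * n) hτ
  rw [hK] at hdown
  have htri := distP_tri_special (xB s t r) (yB s t r) (xB_ne_yB s t r) (dOf t r) hd.1 hd.2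
    (Pos sched (some (xB s t r, dOf t r - 1)) τ)
  exact posE_char _ _ _ τ (xB_ne_yB s t r) hd.1 hd.2 hτ _ (by omega) (by omega)

end Enf

section Root
variable {m n : ℕ} (s : Fin n → Fin m) (π : Equiv.Perm (Option (Fin m)))
  (sched : List (List (PV m n × PV m n)))

lemma posE_at_pred (xb yb : Branch m n) (d : ℕ) (hd : 1 ≤ d) :
    posE xb yb d (d - 1) = some (xb, 0) := by
  rw [posE, if_pos (by omega), show d - (d - 1) - 1 = 0 by omega]

lemma posE_at_self (xb yb : Branch m n) (d : ℕ) : posE xb yb d d = none := by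
  rw [posE, if_neg (by omega), if_pos rfl]

lemma posE_at_succ (xb yb : Branch m n) (d : ℕ) : posE xb yb d (d + 1) = some (yb, 0) := by
  rw [posE, if_neg (by omega), if_neg (by omega), show d + 1 - d - 1 = 0 by omega]

/-- The branch whose distance-1 vertex is swapped with the root in round `8t+j`. -/
def pBr (t : Fin n) (j : ℕ) : Branch m n :=
  if j = 1 then Sum.inr (Sum.inl (aFun s t.val (s t)))
  else if j = 3 then Sum.inr (Sum.inr false)
  else if j = 4 then Sum.inr (Sum.inr true)
  else if j = 6 then Sum.inr (Sum.inl ⟨m + t.val, Nat.add_lt_add_left t.isLt m⟩)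
  else Sum.inl t

/-- The vertex swapped with the root in round `8t+j`. -/
def pV (t : Fin n) (j : ℕ) : PV m n := some (pBr s t j, 0)

variable (hsol : IsSolution s π (8 * n) sched)

include hsol in
lemma root_pair_even (hn : 0 < n) (t : Fin n) (r : Fin 4) (ρ : ℕ)
    (hρeq : ρ + 1 = dOf t r) (hlt : ρ < sched.length) :
    roundF (sched.get ⟨ρ, hlt⟩) none = some (xB s t r, 0) ∧
      roundF (sched.get ⟨ρ, hlt⟩) (some (xB s t r, 0)) = none := by
  have hd := dOf_bounds t r
  have hlen := sched_length s π sched hsol hn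
  have h1 := e_pos s π sched hsol hn t r ρ (by omega)
  have h2 := e_pos s π sched hsol hn t r (ρ + 1) (by omega)
  have hstep := Pos_succ sched (enfInit s t r) ρ hlt
  have e1 : posE (xB s t r) (yB s t r) (dOf t r) ρ = some (xB s t r, 0) := by
    rw [show ρ = dOf t r - 1 by omega]; exact posE_at_pred _ _ _ hd.1
  have e2 : posE (xB s t r) (yB s t r) (dOf t r) (ρ + 1) = none := by
    rw [hρeq]; exact posE_at_self _ _ _
  rw [h2, h1, e1, e2] at hstep
  constructor
  · exact roundF_swap_back _ ((hsol.2.1 _ (sched.get_mem _)).2) _ _ hstep.symm (by simp)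
  · exact hstep.symm

include hsol in
lemma root_pair_odd (hn : 0 < n) (t : Fin n) (r : Fin 4) (ρ : ℕ)
    (hρeq : ρ = dOf t r) (hlt : ρ < sched.length) :
    roundF (sched.get ⟨ρ, hlt⟩) none = some (yB s t r, 0) ∧
      roundF (sched.get ⟨ρ, hlt⟩) (some (yB s t r, 0)) = none := by
  have hd := dOf_bounds t r
  have hlen := sched_length s π sched hsol hn
  have h1 := e_pos s π sched hsol hn t r ρ (by omega)
  have h2 := e_pos s π sched hsol hn t r (ρ + 1) (by omega)
  have hstep := Pos_succ sched (enfInit s t r) ρ hlt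
  have e1 : posE (xB s t r) (yB s t r) (dOf t r) ρ = none := by
    rw [hρeq]; exact posE_at_self _ _ _
  have e2 : posE (xB s t r) (yB s t r) (dOf t r) (ρ + 1) = some (yB s t r, 0) := by
    rw [hρeq]; exact posE_at_succ _ _ _
  rw [h2, h1, e1, e2] at hstep
  constructor
  · exact hstep.symm
  · exact roundF_swap_back _ ((hsol.2.1 _ (sched.get_mem _)).2) _ _ hstep.symm (by simp)

include hsol in
lemma root_pair (hn : 0 < n) (t : Fin n) (j : Fin 8) (hlt : 8 * t.val + j.val < sched.length) :
    roundF (sched.get ⟨8 * t.val + j.val, hlt⟩) none = pV s t j.val ∧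
      roundF (sched.get ⟨8 * t.val + j.val, hlt⟩) (pV s t j.val) = none := by
  fin_cases j
  · simpa [pV, pBr, xB] using
      root_pair_even s π sched hsol hn t ⟨0, by omega⟩ _ (by simp [dOf]; try omega) hlt
  · simpa [pV, pBr, yB] using
      root_pair_odd s π sched hsol hn t ⟨0, by omega⟩ _ (by simp [dOf]; try omega) hlt
  · simpa [pV, pBr, xB] using
      root_pair_even s π sched hsol hn t ⟨1, by omega⟩ _ (by simp [dOf]; try omega) hlt
  · simpa [pV, pBr, yB] using
      root_pair_odd s π sched hsol hn t ⟨1, by omega⟩ _ (by simp [dOf]; try omega) hlt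
  · simpa [pV, pBr, xB] using
      root_pair_even s π sched hsol hn t ⟨2, by omega⟩ _ (by simp [dOf]; try omega) hlt
  · simpa [pV, pBr, yB] using
      root_pair_odd s π sched hsol hn t ⟨2, by omega⟩ _ (by simp [dOf]; try omega) hlt
  · simpa [pV, pBr, xB] using
      root_pair_even s π sched hsol hn t ⟨3, by omega⟩ _ (by simp [dOf]; try omega) hlt
  · simpa [pV, pBr, yB] using
      root_pair_odd s π sched hsol hn t ⟨3, by omega⟩ _ (by simp [dOf]; try omega) hlt

include hsol in
lemma RL1 (hn : 0 < n) (t : Fin n) (j : Fin 8) (hρ : 8 * t.val + j.val < 8 * n) (v : PV m n)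
    (h : Pos sched v (8 * t.val + j.val) = none) :
    Pos sched v (8 * t.val + j.val + 1) = pV s t j.val := by
  have hlt : 8 * t.val + j.val < sched.length := by
    rw [sched_length s π sched hsol hn]; exact hρ
  rw [Pos_succ sched v _ hlt, h]
  exact (root_pair s π sched hsol hn t j hlt).1

include hsol in
lemma RL2 (hn : 0 < n) (t : Fin n) (j : Fin 8) (hρ : 8 * t.val + j.val < 8 * n) (v : PV m n)
    (h : Pos sched v (8 * t.val + j.val) = pV s t j.val) :
    Pos sched v (8 * t.val + j.val + 1) = none := by
  have hlt : 8 * t.val + j.val < sched.length := by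
    rw [sched_length s π sched hsol hn]; exact hρ
  rw [Pos_succ sched v _ hlt, h]
  exact (root_pair s π sched hsol hn t j hlt).2

include hsol in
lemma RL3 (hn : 0 < n) (t : Fin n) (j : Fin 8) (hρ : 8 * t.val + j.val < 8 * n) (v : PV m n)
    (h : Pos sched v (8 * t.val + j.val + 1) = none) :
    Pos sched v (8 * t.val + j.val) = pV s t j.val := by
  have hlt : 8 * t.val + j.val < sched.length := by
    rw [sched_length s π sched hsol hn]; exact hρ
  rw [Pos_succ sched v _ hlt] at h
  have h2 := (root_pair s π sched hsol hn t j hlt).2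
  exact roundF_injective _ (h.trans h2.symm)

end Root

section Stay
variable {m n : ℕ} (s : Fin n → Fin m) (π : Equiv.Perm (Option (Fin m)))
  (sched : List (List (PV m n × PV m n))) (hsol : IsSolution s π (8 * n) sched)

include hsol in
lemma stay_step (hn : 0 < n) (ρ : ℕ) (hρ : ρ < 8 * n) (b : Branch m n) (v : PV m n) (c : ℕ)
    (hpos : Pos sched v ρ = some (b, c))
    (hne : some (b, c) ≠ pV s ⟨ρ / 8, by omega⟩ (ρ % 8)) :
    ∃ c', Pos sched v (ρ + 1) = some (b, c') := by
  have hmatch := hsol.2.1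
  rcases Pos_move sched hmatch v ρ with h | h
  · exact ⟨c, by rw [h, hpos]⟩
  · rw [hpos] at h
    rcases adj_cases h with ⟨b0, ⟨h1, h2⟩ | ⟨h1, h2⟩⟩ | ⟨b0, j, ⟨h1, h2⟩ | ⟨h1, h2⟩⟩
    · exact absurd h1 (by simp)
    · exfalso
      have hP : Pos sched v (8 * (ρ / 8) + ρ % 8 + 1) = none := by
        rw [Nat.div_add_mod]; exact h1
      have hkey := RL3 s π sched hsol hn ⟨ρ / 8, by omega⟩ ⟨ρ % 8, by omega⟩
        (by simp; omega) v hP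
      rw [Nat.div_add_mod, hpos] at hkey
      exact hne hkey
    · obtain ⟨hb, hj⟩ : b = b0 ∧ c = j := by simpa using h1
      exact ⟨j + 1, by rw [h2, ← hb]⟩
    · obtain ⟨hb, hj⟩ : b = b0 ∧ c = j + 1 := by simpa using h2
      exact ⟨j, by rw [h1, ← hb]⟩

include hsol in
lemma stay_interval (hn : 0 < n) (b : Branch m n) (v : PV m n) (τ₁ τ₂ : ℕ) (hle : τ₁ ≤ τ₂)
    (hτ₂ : τ₂ ≤ 8 * n)
    (hcond : ∀ ρ, τ₁ ≤ ρ → ρ < τ₂ →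
      (∀ (h8 : ρ / 8 < n), pBr s ⟨ρ / 8, h8⟩ (ρ % 8) ≠ b) ∨
      (∀ (h8 : ρ / 8 < n), Pos sched v ρ ≠ pV s ⟨ρ / 8, h8⟩ (ρ % 8)))
    (hstart : ∃ c, Pos sched v τ₁ = some (b, c)) :
    ∃ c, Pos sched v τ₂ = some (b, c) := by
  induction τ₂, hle using Nat.le_induction with
  | base => exact hstart
  | succ τ₂ hle ih =>
      obtain ⟨c, hc⟩ := ih (by omega) (fun ρ h1 h2 => hcond ρ h1 (by omega))
      have h8 : τ₂ / 8 < n := by omega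
      refine stay_step s π sched hsol hn τ₂ (by omega) b v c hc ?_
      rcases hcond τ₂ (by omega) (by omega) with hA | hB
      · intro hcontra
        rw [pV] at hcontra
        exact hA h8 (by injection hcontra with h; exact (Prod.mk.injEq _ _ _ _ ▸ h).1.symm ▸ rfl)
      · intro hcontra
        exact hB h8 (by rw [hc]; exact hcontra)

end Stay

section Items
variable {m n : ℕ} (s : Fin n → Fin m) (π : Equiv.Perm (Option (Fin m)))
  (sched : List (List (PV m n × PV m n))) (hsol : IsSolution s π (8 * n) sched)

lemma itemInit_inj : Function.Injective (itemInit s) := by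
  intro a b h
  rcases a with _ | i <;> rcases b with _ | j <;> simp [itemInit] at h ⊢
  exact aFun_inj s 0 h

include hsol in
lemma item_final (o : Option (Fin m)) :
    Pos sched (itemInit s o) (8 * n) = tgtP s π (Sum.inl o) := by
  rw [Pos, List.take_of_length_le hsol.1]
  exact hsol.2.2 (Sum.inl o)

include hsol in
lemma item_final_none (o : Option (Fin m))
    (h : Pos sched (itemInit s o) (8 * n) = none) : π o = none := by
  have hf := item_final s π sched hsol o
  rcases hπ : π o with _ | j
  · rfl
  · rw [h] at hf
    simp only [tgtP, hπ] at hf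
    exact absurd hf.symm (by simp)

include hsol in
lemma item_final_branch (o : Option (Fin m)) (b : Branch m n) (c : ℕ)
    (h : Pos sched (itemInit s o) (8 * n) = some (b, c)) :
    ∃ j, π o = some j ∧ b = Sum.inr (Sum.inl (aFun s n j)) ∧ c = 0 := by
  have hf := item_final s π sched hsol o
  rcases hπ : π o with _ | j
  · rw [h] at hf
    simp only [tgtP, hπ] at hf
    exact absurd hf (by simp)
  · rw [h] at hf
    simp only [tgtP, hπ] at hf
    have hf2 : b = Sum.inr (Sum.inl (aFun s n j)) ∧ c = 0 := by
      have := hf.symm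
      simp only [Option.some.injEq, Prod.mk.injEq] at this
      exact ⟨this.1.symm, this.2.symm⟩
    exact ⟨j, rfl, hf2.1, hf2.2⟩

lemma starApply_nil (f : Option (Fin m) → Option (Fin m)) : starApply [] f = f := rfl

lemma starApply_concat (σ : List (Fin m)) (l : Fin m) (f : Option (Fin m) → Option (Fin m)) :
    starApply (σ ++ [l]) f = fun o => swapV ((none : Option (Fin m)), some l) (starApply σ f o) := by
  simp [starApply, List.foldl_append]

lemma starApply_bijective (σ : List (Fin m)) (f : Option (Fin m) → Option (Fin m))
    (hf : Function.Bijective f) : Function.Bijective (starApply σ f) := by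
  induction σ generalizing f with
  | nil => exact hf
  | cons l σ ih =>
      refine ih _ ?_
      have : Function.Bijective (swapV ((none : Option (Fin m)), some l)) := by
        constructor
        · exact swapV_injective _
        · intro y
          refine ⟨swapV ((none : Option (Fin m)), some l) y, ?_⟩
          rw [swapV_eq_swap, swapV_eq_swap]
          exact Equiv.swap_apply_self _ _ _
      exact this.comp hf

end Items

section MainArg
variable {m n : ℕ} (s : Fin n → Fin m) (π : Equiv.Perm (Option (Fin m)))
  (sched : List (List (PV m n × PV m n)))

lemma pV_shift0 (t : ℕ) (ht : t < n) (h1 : 8 * t / 8 < n) :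
    pV s ⟨8 * t / 8, h1⟩ (8 * t % 8) = pV s ⟨t, ht⟩ 0 := by
  have e1 : ((⟨8 * t / 8, h1⟩ : Fin n)) = ⟨t, ht⟩ := by rw [Fin.mk_eq_mk]; omega
  have e2 : 8 * t % 8 = 0 := by omega
  rw [e1, e2]

lemma pV_shift (t k : ℕ) (ht : t < n) (hk : k < 8) (h1 : (8 * t + k) / 8 < n) :
    pV s ⟨(8 * t + k) / 8, h1⟩ ((8 * t + k) % 8) = pV s ⟨t, ht⟩ k := by
  have e1 : ((⟨(8 * t + k) / 8, h1⟩ : Fin n)) = ⟨t, ht⟩ := by rw [Fin.mk_eq_mk]; omega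
  have e2 : (8 * t + k) % 8 = k := by omega
  rw [e1, e2]

/-- The invariant: after `8t` rounds, some sublist `σ'` of the first `t` swaps
describes the star-positions of all the item tokens. -/
def Inv (t : ℕ) : Prop :=
  ∃ σ' : List (Fin m), σ'.Sublist ((List.ofFn s).take t) ∧
    ∀ o : Option (Fin m),
      (starApply σ' id o = none → Pos sched (itemInit s o) (8 * t) = none) ∧
      (∀ i : Fin m, starApply σ' id o = some i →
        ∃ c, Pos sched (itemInit s o) (8 * t) = some (Sum.inr (Sum.inl (aFun s t i)), c))

lemma inv_zero : Inv s sched 0 := by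
  refine ⟨[], by simp, fun o => ⟨?_, ?_⟩⟩
  · intro h
    simp only [starApply_nil, id_eq] at h
    subst h
    rw [show (8 * 0 : ℕ) = 0 by ring, Pos_zero]
    rfl
  · intro i h
    simp only [starApply_nil, id_eq] at h
    subst h
    rw [show (8 * 0 : ℕ) = 0 by ring, Pos_zero]
    exact ⟨0, rfl⟩

variable (hsol : IsSolution s π (8 * n) sched)

include hsol in
lemma doomed (o : Option (Fin m)) (b : Branch m n)
    (hb : ∀ j : Fin m, b ≠ Sum.inr (Sum.inl (aFun s n j)))
    (h : ∃ c, Pos sched (itemInit s o) (8 * n) = some (b, c)) : False := by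
  obtain ⟨c, hc⟩ := h
  obtain ⟨j, hj, hbe, hce⟩ := item_final_branch s π sched hsol o b c hc
  exact hb j hbe

lemma cond_q (t : ℕ) (ht : t < n) (v : PV m n)
    (hv : Pos sched v (8 * t + 1) ≠ pV s ⟨t, ht⟩ 1) :
    ∀ ρ, 8 * t + 1 ≤ ρ → ρ < 8 * n →
      (∀ (h8 : ρ / 8 < n), pBr s ⟨ρ / 8, h8⟩ (ρ % 8) ≠
        Sum.inr (Sum.inl (aFun s t (s ⟨t, ht⟩)))) ∨
      (∀ (h8 : ρ / 8 < n), Pos sched v ρ ≠ pV s ⟨ρ / 8, h8⟩ (ρ % 8)) := by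
  intro ρ hρ1 hρ2
  rcases eq_or_ne ρ (8 * t + 1) with rfl | hρne
  · right
    intro h8
    rw [pV_shift s t 1 ht (by omega)]
    exact hv
  · left
    intro h8
    have hk : ρ % 8 = 0 ∨ ρ % 8 = 1 ∨ ρ % 8 = 2 ∨ ρ % 8 = 3 ∨ ρ % 8 = 4 ∨ ρ % 8 = 5 ∨
        ρ % 8 = 6 ∨ ρ % 8 = 7 := by omega
    rcases hk with hk | hk | hk | hk | hk | hk | hk | hk <;> rw [hk]
    · simp [pBr]
    · simp only [pBr]
      norm_num
      exact aFun_retire s t ht (ρ / 8) (by omega) (s ⟨ρ / 8, h8⟩)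
    · simp [pBr]
    · simp [pBr]
    · simp [pBr]
    · simp [pBr]
    · simp only [pBr]
      norm_num [Fin.ext_iff]
      have := aFun_lt s t (s ⟨t, ht⟩)
      omega
    · simp [pBr]

lemma cond_w (t : ℕ) (ht : t < n) (v : PV m n)
    (h5 : Pos sched v (8 * t + 5) ≠ pV s ⟨t, ht⟩ 5)
    (h7 : Pos sched v (8 * t + 7) ≠ pV s ⟨t, ht⟩ 7) :
    ∀ ρ, 8 * t + 3 ≤ ρ → ρ < 8 * n →
      (∀ (h8 : ρ / 8 < n), pBr s ⟨ρ / 8, h8⟩ (ρ % 8) ≠ Sum.inl ⟨t, ht⟩) ∨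
      (∀ (h8 : ρ / 8 < n), Pos sched v ρ ≠ pV s ⟨ρ / 8, h8⟩ (ρ % 8)) := by
  intro ρ hρ1 hρ2
  rcases eq_or_ne ρ (8 * t + 5) with rfl | hρ5
  · right
    intro h8
    rw [pV_shift s t 5 ht (by omega)]
    exact h5
  rcases eq_or_ne ρ (8 * t + 7) with rfl | hρ7
  · right
    intro h8
    rw [pV_shift s t 7 ht (by omega)]
    exact h7
  · left
    intro h8
    have hk : ρ % 8 = 0 ∨ ρ % 8 = 1 ∨ ρ % 8 = 2 ∨ ρ % 8 = 3 ∨ ρ % 8 = 4 ∨ ρ % 8 = 5 ∨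
        ρ % 8 = 6 ∨ ρ % 8 = 7 := by omega
    rcases hk with hk | hk | hk | hk | hk | hk | hk | hk <;> rw [hk] <;>
      simp [pBr, Fin.ext_iff] <;> omega
  
lemma cond_spect (t : ℕ) (ht : t < n) (i : Fin m) (hi : s ⟨t, ht⟩ ≠ i) :
    ∀ ρ, 8 * t ≤ ρ → ρ < 8 * t + 8 →
      (∀ (h8 : ρ / 8 < n), pBr s ⟨ρ / 8, h8⟩ (ρ % 8) ≠
        Sum.inr (Sum.inl (aFun s t i))) := by
  intro ρ hρ1 hρ2 h8
  have e1 : ((⟨ρ / 8, h8⟩ : Fin n)) = ⟨t, ht⟩ := by rw [Fin.mk_eq_mk]; omega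
  rw [e1]
  have hk : ρ % 8 = 0 ∨ ρ % 8 = 1 ∨ ρ % 8 = 2 ∨ ρ % 8 = 3 ∨ ρ % 8 = 4 ∨ ρ % 8 = 5 ∨
      ρ % 8 = 6 ∨ ρ % 8 = 7 := by omega
  rcases hk with hk | hk | hk | hk | hk | hk | hk | hk <;> rw [hk]
  · simp [pBr]
  · simp only [pBr]
    norm_num
    exact fun heq => hi (aFun_inj s t heq)
  · simp [pBr]
  · simp [pBr]
  · simp [pBr]
  · simp [pBr]
  · simp only [pBr]
    norm_num [Fin.ext_iff]
    have := aFun_lt s t i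
    omega
  · simp [pBr]

include hsol in
lemma spectator (t : ℕ) (ht : t < n) (o : Option (Fin m)) (i : Fin m) (hi : s ⟨t, ht⟩ ≠ i)
    (h0 : ∃ c, Pos sched (itemInit s o) (8 * t) = some (Sum.inr (Sum.inl (aFun s t i)), c)) :
    ∃ c, Pos sched (itemInit s o) (8 * t + 8) = some (Sum.inr (Sum.inl (aFun s t i)), c) := by
  have hn : 0 < n := by omega
  refine stay_interval s π sched hsol hn _ _ (8 * t) (8 * t + 8) (by omega) (by omega)
    ?_ h0
  intro ρ hρ1 hρ2
  exact Or.inl (cond_spect s t ht i hi ρ hρ1 hρ2)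

end MainArg

section StepArg
variable {m n : ℕ} (s : Fin n → Fin m) (π : Equiv.Perm (Option (Fin m)))
  (sched : List (List (PV m n × PV m n)))

lemma swapV_root_none (l : Fin m) (x : Option (Fin m)) :
    swapV ((none : Option (Fin m)), some l) x = none ↔ x = some l := by
  rcases x with _ | j
  · simp [swapV]
  · by_cases hj : j = l <;> simp [swapV, hj]

lemma swapV_root_eq (l : Fin m) (x : Option (Fin m)) :
    swapV ((none : Option (Fin m)), some l) x = some l ↔ x = none := by
  rcases x with _ | j
  · simp [swapV]
  · by_cases hj : j = l <;> simp [swapV, hj]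

lemma swapV_root_other (l i : Fin m) (hi : i ≠ l) (x : Option (Fin m)) :
    swapV ((none : Option (Fin m)), some l) x = some i ↔ x = some i := by
  rcases x with _ | j
  · constructor
    · intro h
      exfalso
      apply hi
      have h2 : some l = some i := by simpa [swapV] using h
      exact (Option.some.inj h2).symm
    · intro h
      exact nomatch h
  · by_cases hj : j = l
    · subst hj
      constructor
      · intro h
        simp [swapV] at h
      · intro h
        exact absurd (Option.some.inj h).symm hi
    · simp [swapV, hj]

variable (hsol : IsSolution s π (8 * n) sched)

include hsol in
lemma inv_step (t : ℕ) (ht : t < n) (hInv : Inv s sched t) : Inv s sched (t + 1) := by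
  have hn : 0 < n := by omega
  obtain ⟨σ', hsub, hitem⟩ := hInv
  have hbij : Function.Bijective (starApply σ' (id : Option (Fin m) → Option (Fin m))) :=
    starApply_bijective σ' id Function.bijective_id
  obtain ⟨oT, hoT⟩ := hbij.2 none
  obtain ⟨oA, hoA⟩ := hbij.2 (some (s ⟨t, ht⟩))
  have hTA : oT ≠ oA := by
    intro h
    rw [h, hoA] at hoT
    exact nomatch hoT
  have hT0 : Pos sched (itemInit s oT) (8 * t) = none := (hitem oT).1 hoT
  have hT1 : Pos sched (itemInit s oT) (8 * t + 1) = pV s ⟨t, ht⟩ 0 :=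
    RL1 s π sched hsol hn ⟨t, ht⟩ ⟨0, by omega⟩ (by show 8 * t + 0 < 8 * n; omega) _ hT0
  obtain ⟨cA, hA0⟩ := (hitem oA).2 (s ⟨t, ht⟩) hoA
  obtain ⟨cA1, hA1⟩ : ∃ c, Pos sched (itemInit s oA) (8 * t + 1) =
      some (Sum.inr (Sum.inl (aFun s t (s ⟨t, ht⟩))), c) := by
    refine stay_step s π sched hsol hn (8 * t) (by omega) _ _ cA hA0 ?_
    rw [pV_shift0 s t ht]
    simp [pV, pBr]
  have hA1v : Pos sched (itemInit s oA) (8 * t + 1) = pV s ⟨t, ht⟩ 1 := by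
    by_contra hne2
    refine doomed s π sched hsol oA (Sum.inr (Sum.inl (aFun s t (s ⟨t, ht⟩)))) ?_ ?_
    · intro j heq
      rw [Sum.inr.injEq, Sum.inl.injEq] at heq
      exact aFun_retire s t ht n ht j heq.symm
    · exact stay_interval s π sched hsol hn _ _ (8 * t + 1) (8 * n) (by omega) le_rfl
        (cond_q s sched t ht _ hne2) ⟨cA1, hA1⟩
  have hA2 : Pos sched (itemInit s oA) (8 * t + 2) = none :=
    RL2 s π sched hsol hn ⟨t, ht⟩ ⟨1, by omega⟩ (by show 8 * t + 1 < 8 * n; omega) _ hA1v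
  have hA3 : Pos sched (itemInit s oA) (8 * t + 3) = pV s ⟨t, ht⟩ 2 :=
    RL1 s π sched hsol hn ⟨t, ht⟩ ⟨2, by omega⟩ (by show 8 * t + 2 < 8 * n; omega) _ hA2
  obtain ⟨cT2, hT2⟩ : ∃ c, Pos sched (itemInit s oT) (8 * t + 2) =
      some (Sum.inl ⟨t, ht⟩, c) := by
    refine stay_step s π sched hsol hn (8 * t + 1) (by omega) _ _ 0 hT1 ?_
    rw [pV_shift s t 1 ht (by omega)]
    simp [pV, pBr]
  have hE2 : Pos sched (enfInit s ⟨t, ht⟩ ⟨1, by omega⟩) (8 * t + 2) =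
      some (Sum.inl ⟨t, ht⟩, 0) := by
    have h := e_pos s π sched hsol hn ⟨t, ht⟩ ⟨1, by omega⟩ (8 * t + 2) (by omega)
    rw [h, posE, if_pos (show 8 * t + 2 < dOf ⟨t, ht⟩ ⟨1, by omega⟩ by simp [dOf])]
    simp [xB, dOf]
  obtain ⟨cT3, hT3⟩ : ∃ c, Pos sched (itemInit s oT) (8 * t + 3) =
      some (Sum.inl ⟨t, ht⟩, c) := by
    refine stay_step s π sched hsol hn (8 * t + 2) (by omega) _ _ cT2 hT2 ?_
    rw [pV_shift s t 2 ht (by omega)]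
    intro heq
    have h1 : Pos sched (itemInit s oT) (8 * t + 2) =
        Pos sched (enfInit s ⟨t, ht⟩ ⟨1, by omega⟩) (8 * t + 2) :=
      hT2.trans (heq.trans hE2.symm)
    have h2 := Pos_injective sched (8 * t + 2) h1
    rcases oT with _ | i
    · simp [itemInit, enfInit] at h2
    · rw [itemInit] at h2
      rw [enfInit] at h2
      simp only [Option.some.injEq, Prod.mk.injEq] at h2
      rcases h2 with ⟨h2, -⟩
      simp [xB] at h2
  have hexit : ∀ o : Option (Fin m),
      (∃ c, Pos sched (itemInit s o) (8 * t + 3) = some (Sum.inl ⟨t, ht⟩, c)) →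
      Pos sched (itemInit s o) (8 * t + 5) = pV s ⟨t, ht⟩ 5 ∨
        Pos sched (itemInit s o) (8 * t + 7) = pV s ⟨t, ht⟩ 7 := by
    intro o h3
    by_contra hcon
    push_neg at hcon
    refine doomed s π sched hsol o (Sum.inl ⟨t, ht⟩)
      (fun j heq => nomatch heq) ?_
    exact stay_interval s π sched hsol hn _ _ (8 * t + 3) (8 * n) (by omega) le_rfl
      (cond_w s sched t ht _ hcon.1 hcon.2) h3
  have exT := hexit oT ⟨cT3, hT3⟩
  have exA := hexit oA ⟨0, hA3⟩
  have hposne : ∀ τ, Pos sched (itemInit s oT) τ ≠ Pos sched (itemInit s oA) τ := by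
    intro τ heq
    exact hTA (itemInit_inj s (Pos_injective sched τ heq))
  have hfin : ∀ oB oC : Option (Fin m),
      Pos sched (itemInit s oB) (8 * t + 5) = pV s ⟨t, ht⟩ 5 →
      Pos sched (itemInit s oC) (8 * t + 7) = pV s ⟨t, ht⟩ 7 →
      (∃ c, Pos sched (itemInit s oB) (8 * (t + 1)) =
          some (Sum.inr (Sum.inl (aFun s (t + 1) (s ⟨t, ht⟩))), c)) ∧
        Pos sched (itemInit s oC) (8 * (t + 1)) = none := by
    intro oB oC hB5 hC7
    have hB6 : Pos sched (itemInit s oB) (8 * t + 6) = none :=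
      RL2 s π sched hsol hn ⟨t, ht⟩ ⟨5, by omega⟩ (by show 8 * t + 5 < 8 * n; omega) _ hB5
    have hB7 : Pos sched (itemInit s oB) (8 * t + 7) = pV s ⟨t, ht⟩ 6 :=
      RL1 s π sched hsol hn ⟨t, ht⟩ ⟨6, by omega⟩ (by show 8 * t + 6 < 8 * n; omega) _ hB6
    have hB8 : ∃ c, Pos sched (itemInit s oB) (8 * t + 8) =
        some (Sum.inr (Sum.inl ⟨m + t, by omega⟩), c) := by
      refine stay_step s π sched hsol hn (8 * t + 7) (by omega) _ _ 0 hB7 ?_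
      rw [pV_shift s t 7 ht (by omega)]
      simp [pV, pBr]
    have hC8 : Pos sched (itemInit s oC) (8 * t + 8) = none :=
      RL2 s π sched hsol hn ⟨t, ht⟩ ⟨7, by omega⟩ (by show 8 * t + 7 < 8 * n; omega) _ hC7
    have h88 : 8 * (t + 1) = 8 * t + 8 := by ring
    rw [h88]
    refine ⟨?_, hC8⟩
    rw [aFun_succ_self s t ht]
    exact hB8
  have hspect : ∀ o : Option (Fin m), ∀ i : Fin m, starApply σ' id o = some i →
      s ⟨t, ht⟩ ≠ i →
      ∃ c, Pos sched (itemInit s o) (8 * (t + 1)) =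
        some (Sum.inr (Sum.inl (aFun s (t + 1) i)), c) := by
    intro o i hfo hi
    have h0 := (hitem o).2 i hfo
    have h8 := spectator s π sched hsol t ht o i hi h0
    have h88 : 8 * (t + 1) = 8 * t + 8 := by ring
    rw [h88, aFun_succ_other s t ht i hi]
    exact h8
  have htake : (List.ofFn s).take (t + 1) = (List.ofFn s).take t ++ [s ⟨t, ht⟩] := by
    rw [List.take_succ]
    congr 1
    rw [List.getElem?_eq_getElem (by simpa using ht)]
    simp
  rcases exT with hT5 | hT7 <;> rcases exA with hA5 | hA7
  · exact absurd (hT5.trans hA5.symm) (hposne (8 * t + 5))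
  · -- swap performed
    obtain ⟨hB8, hC8⟩ := hfin oT oA hT5 hA7
    refine ⟨σ' ++ [s ⟨t, ht⟩], ?_, ?_⟩
    · rw [htake]
      exact hsub.append (List.Sublist.refl _)
    · intro o
      constructor
      · intro hnone
        rw [starApply_concat, swapV_root_none] at hnone
        have : o = oA := hbij.1 (hnone.trans hoA.symm)
        subst this
        exact hC8
      · intro i hsome
        rw [starApply_concat] at hsome
        by_cases hil : i = s ⟨t, ht⟩
        · subst hil
          rw [swapV_root_eq] at hsome
          have : o = oT := hbij.1 (hsome.trans hoT.symm)
          subst this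
          exact hB8
        · rw [swapV_root_other _ _ hil] at hsome
          exact hspect o i hsome (fun h => hil h.symm)
  · -- no swap
    obtain ⟨hB8, hC8⟩ := hfin oA oT hA5 hT7
    refine ⟨σ', ?_, ?_⟩
    · have h1 : (List.ofFn s).take t = ((List.ofFn s).take (t + 1)).take t := by
        rw [List.take_take, min_eq_left (by omega)]
      exact hsub.trans (h1 ▸ (List.take_prefix t ((List.ofFn s).take (t + 1))).sublist)
    · intro o
      constructor
      · intro hnone
        have : o = oT := hbij.1 (hnone.trans hoT.symm)
        subst this
        exact hC8
      · intro i hsome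
        by_cases hil : i = s ⟨t, ht⟩
        · subst hil
          have : o = oA := hbij.1 (hsome.trans hoA.symm)
          subst this
          exact hB8
        · exact hspect o i hsome (fun h => hil h.symm)
  · exact absurd (hT7.trans hA7.symm) (hposne (8 * t + 7))

end StepArg

/-!
STATEMENT 13: If the constructed parallel token swapping instance has a `K`-round
solution, where `K = 8n`, then the Star STS instance is a YES instance.
-/
theorem parallel_solution_implies_starSTS_yes {m n : ℕ}
    (s : Fin n → Fin m) (π : Equiv.Perm (Option (Fin m)))
    (sched : List (List (PV m n × PV m n)))
    (hsol : IsSolution s π (8 * n) sched) :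
    StarSTSYes π (List.ofFn s) := by
  have hInvAll : ∀ t, t ≤ n → Inv s sched t := by
    intro t
    induction t with
    | zero => intro _; exact inv_zero s sched
    | succ t ih =>
        intro h
        exact inv_step s π sched hsol t (by omega) (ih (by omega))
  obtain ⟨σ', hsub, hitem⟩ := hInvAll n le_rfl
  refine ⟨σ', ?_, ?_⟩
  · have h1 : (List.ofFn s).take n = List.ofFn s :=
      List.take_of_length_le (by simp)
    rwa [h1] at hsub
  · funext o
    rcases hv : starApply σ' id o with _ | i
    · have h1 := (hitem o).1 hv
      have h2 := item_final_none s π sched hsol o h1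
      exact h2.symm
    · obtain ⟨c, hc⟩ := (hitem o).2 i hv
      obtain ⟨j, hj, hb, hc0⟩ := item_final_branch s π sched hsol o _ _ hc
      have hji : i = j := by
        rw [Sum.inr.injEq, Sum.inl.injEq] at hb
        exact aFun_inj s n hb
      rw [hj, hji]

end ParallelTS
end

section
/- Call a swap sequence minimal if no pair of tokens swaps with each other more than once. Let G be a graph, let v be a vertex of degree 1, and suppose the token initially at v has target vertex v (a happy leaf token). Then in every minimal 1-straying swap sequence solving the instance, this token never moves. -/
namespace Straying

/-- Apply a sequence of swaps to a placement (each token is named by its initial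
vertex; the placement sends each token to its current vertex). -/
def applySeq {V : Type*} [DecidableEq V] (σ : List (V × V)) (p : Equiv.Perm V) :
    Equiv.Perm V :=
  σ.foldl (fun q e => q.trans (Equiv.swap e.1 e.2)) p

/-- The position of the token named `u` after the first `τ` swaps of `σ`. -/
def posAt {V : Type*} [DecidableEq V] (σ : List (V × V)) (u : V) (τ : ℕ) : V :=
  applySeq (σ.take τ) 1 u

/-- The unordered pair of tokens exchanged by the `i`-th swap of `σ`. -/
def swappedPair {V : Type*} [DecidableEq V] (σ : List (V × V)) (i : Fin σ.length) :
    Sym2 V :=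
  s((applySeq (σ.take i) 1).symm (σ.get i).1, (applySeq (σ.take i) 1).symm (σ.get i).2)

/-- A swap sequence is minimal if no pair of tokens swaps with each other more than
once. -/
def MinimalSeq {V : Type*} [DecidableEq V] (σ : List (V × V)) : Prop :=
  ∀ i j : Fin σ.length, i < j → swappedPair σ i ≠ swappedPair σ j

/-- A swap sequence is `ℓ`-straying (with respect to the system `P` of paths, `P u`
being the path of the token named `u` from its initial vertex `u` to its target
vertex `π u`): at every intermediate configuration, every token is within distance
`ℓ` of the last vertex of its path that it has reached so far. -/
def IsStraying {V : Type*} [DecidableEq V] (G : SimpleGraph V) (π : Equiv.Perm V)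
    (σ : List (V × V)) (P : ∀ u : V, G.Walk u (π u)) (ℓ : ℕ) : Prop :=
  ∀ τ ≤ σ.length, ∀ u : V, ∃ i ≤ (P u).length,
    (∃ τ' ≤ τ, posAt σ u τ' = (P u).getVert i) ∧
    (∀ j ≤ (P u).length, (∃ τ' ≤ τ, posAt σ u τ' = (P u).getVert j) → j ≤ i) ∧
    G.dist (posAt σ u τ) ((P u).getVert i) ≤ ℓ

end Straying

namespace Straying

/-!
STATEMENT 15: Let `G` be a graph, `v` a vertex of degree `1`, and suppose the token
initially at `v` has target vertex `v` (a happy leaf token).  Then in every minimal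
`1`-straying swap sequence solving the instance, this token never moves.
-/
lemma posAt_zero {V : Type*} [DecidableEq V] (σ : List (V × V)) (u : V) :
    posAt σ u 0 = u := rfl

lemma posAt_succ {V : Type*} [DecidableEq V] (σ : List (V × V)) (u : V) (τ : ℕ)
    (h : τ < σ.length) :
    posAt σ u (τ + 1) = Equiv.swap (σ.get ⟨τ, h⟩).1 (σ.get ⟨τ, h⟩).2 (posAt σ u τ) := by
  unfold posAt applySeq
  rw [List.take_succ, List.getElem?_eq_getElem h, Option.toList_some, List.foldl_append]
  simp

theorem happy_leaf_token_never_moves {V : Type*} [DecidableEq V] [Fintype V]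
    (G : SimpleGraph V) [DecidableRel G.Adj]
    (π : Equiv.Perm V) (v : V) (hdeg : G.degree v = 1) (hv : π v = v)
    (σ : List (V × V)) (hedges : ∀ e ∈ σ, G.Adj e.1 e.2)
    (hsol : applySeq σ 1 = π)
    (hmin : MinimalSeq σ)
    (P : ∀ u : V, G.Walk u (π u)) (hP : ∀ u, (P u).IsPath)
    (hstray : IsStraying G π σ P 1) :
    ∀ τ ≤ σ.length, posAt σ v τ = v := by
  classical
  -- the unique neighbour of v
  have huniq : ∀ {x y : V}, G.Adj v x → G.Adj v y → x = y := by
    intro x y hx hy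
    have h1 : (G.neighborFinset v).card ≤ 1 := by
      rw [SimpleGraph.card_neighborFinset_eq_degree, hdeg]
    exact Finset.card_le_one.mp h1 x ((SimpleGraph.mem_neighborFinset G v x).mpr hx)
      y ((SimpleGraph.mem_neighborFinset G v y).mpr hy)
  -- P v has length 0
  have hlen0 : (P v).length = 0 := by
    have hp : ((P v).copy rfl hv).IsPath := (SimpleGraph.Walk.isPath_copy _ rfl hv).mpr (hP v)
    have := (SimpleGraph.Walk.isPath_iff_eq_nil).mp hp
    have hl := congrArg SimpleGraph.Walk.length this
    simpa using hl
  -- straying consequence for the token v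
  have hnear : ∀ τ ≤ σ.length, G.Reachable (posAt σ v τ) v →
      posAt σ v τ = v ∨ G.Adj (posAt σ v τ) v := by
    intro τ hτ hr
    obtain ⟨i, hi, -, -, hdist⟩ := hstray τ hτ v
    have hi0 : i = 0 := Nat.le_zero.mp (hlen0 ▸ hi)
    rw [hi0, SimpleGraph.Walk.getVert_zero] at hdist
    rcases Nat.le_one_iff_eq_zero_or_eq_one.mp hdist with h0 | h1
    · exact Or.inl (hr.dist_eq_zero_iff.mp h0)
    · exact Or.inr ((SimpleGraph.dist_eq_one_iff_adj).mp h1)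
  by_contra hcon
  push_neg at hcon
  obtain ⟨τ₁, hτ₁le, hτ₁ne⟩ := hcon
  have hex : ∃ τ, τ ≤ σ.length ∧ posAt σ v τ ≠ v := ⟨τ₁, hτ₁le, hτ₁ne⟩
  set τ₀ := Nat.find hex with hτ₀def
  obtain ⟨hτ₀le, hτ₀ne⟩ := Nat.find_spec hex
  rw [← hτ₀def] at hτ₀le hτ₀ne
  have hbefore : ∀ m < τ₀, posAt σ v m = v := by
    intro m hm
    have := Nat.find_min hex hm
    push_neg at this
    exact this (le_trans (le_of_lt hm) hτ₀le)
  have hτ₀pos : τ₀ ≠ 0 := by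
    intro h
    apply hτ₀ne
    rw [h]
    exact posAt_zero σ v
  obtain ⟨k, hk⟩ : ∃ k, τ₀ = k + 1 := ⟨τ₀ - 1, (Nat.succ_pred_eq_of_ne_zero hτ₀pos).symm⟩
  have hklt : k < σ.length := by omega
  have hpk : posAt σ v k = v := hbefore k (by omega)
  set a := (σ.get ⟨k, hklt⟩).1 with ha
  set b := (σ.get ⟨k, hklt⟩).2 with hb
  have hadjab : G.Adj a b := hedges _ (σ.get_mem _)
  have hstep0 : posAt σ v τ₀ = Equiv.swap a b v := by
    rw [hk, posAt_succ σ v k hklt, hpk]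
  -- v is an endpoint of the k-th swap; w is the other endpoint
  have hvab : v = a ∨ v = b := by
    by_contra hne
    push_neg at hne
    rw [Equiv.swap_apply_of_ne_of_ne (Ne.symm (fun h => hne.1 h.symm)) (Ne.symm (fun h => hne.2 h.symm))] at hstep0
    exact hτ₀ne hstep0
  obtain ⟨w, hwadj, hswap⟩ : ∃ w, G.Adj v w ∧ Equiv.swap a b = Equiv.swap v w := by
    rcases hvab with h | h
    · exact ⟨b, h ▸ hadjab, by rw [h]⟩
    · exact ⟨a, h ▸ hadjab.symm, by rw [h, Equiv.swap_comm]⟩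
  have hwv : w ≠ v := (hwadj.ne).symm
  have hpτ₀ : posAt σ v τ₀ = w := by
    rw [hstep0, hswap, Equiv.swap_apply_left]
  set q : Equiv.Perm V := applySeq (σ.take k) 1 with hq
  set t : V := q.symm w with ht
  have hqv : q v = v := hpk
  have hqt : posAt σ t k = w := q.apply_symm_apply w
  have hpair : swappedPair σ ⟨k, hklt⟩ = s(t, v) := by
    unfold swappedPair
    have h1 : q.symm v = v := by
      rw [Equiv.symm_apply_eq]
      exact hqv.symm
    rcases hvab with h | h
    · have hbw : b = w := by
        have : Equiv.swap a b v = w := by rw [hswap, Equiv.swap_apply_left]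
        rw [← h, Equiv.swap_apply_left] at this; exact this
      rw [show ((σ.get ⟨k, hklt⟩).1) = a from rfl, show ((σ.get ⟨k, hklt⟩).2) = b from rfl,
        ← h, hbw]
      rw [show applySeq (σ.take (⟨k, hklt⟩ : Fin σ.length)) 1 = q from rfl]
      rw [h1, ← ht, Sym2.eq_swap]
    · have haw : a = w := by
        have : Equiv.swap a b v = w := by rw [hswap, Equiv.swap_apply_left]
        rw [← h, Equiv.swap_apply_right] at this; exact this
      rw [show ((σ.get ⟨k, hklt⟩).1) = a from rfl, show ((σ.get ⟨k, hklt⟩).2) = b from rfl,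
        ← h, haw]
      rw [show applySeq (σ.take (⟨k, hklt⟩ : Fin σ.length)) 1 = q from rfl]
      rw [h1, ← ht]
  have hpt₀ : posAt σ t τ₀ = v := by
    rw [hk, posAt_succ σ t k hklt, ← ha, ← hb, hswap]
    rw [show posAt σ t k = w from hqt, Equiv.swap_apply_right]
  -- the invariant
  have key : ∀ m, τ₀ + m ≤ σ.length →
      posAt σ v (τ₀ + m) = w ∧ posAt σ t (τ₀ + m) = v := by
    intro m
    induction m with
    | zero => intro _; exact ⟨hpτ₀, hpt₀⟩
    | succ n ih =>
      intro hle
      have hτle : τ₀ + n ≤ σ.length := by omega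
      have hτlt : τ₀ + n < σ.length := by omega
      obtain ⟨ihv, iht⟩ := ih hτle
      set a' := (σ.get ⟨τ₀ + n, hτlt⟩).1 with ha'
      set b' := (σ.get ⟨τ₀ + n, hτlt⟩).2 with hb'
      have hadj' : G.Adj a' b' := hedges _ (σ.get_mem _)
      have hsv : posAt σ v (τ₀ + (n+1)) = Equiv.swap a' b' w := by
        rw [show τ₀ + (n+1) = (τ₀ + n) + 1 by omega, posAt_succ σ v (τ₀+n) hτlt, ihv]
      have hst : posAt σ t (τ₀ + (n+1)) = Equiv.swap a' b' v := by
        rw [show τ₀ + (n+1) = (τ₀ + n) + 1 by omega, posAt_succ σ t (τ₀+n) hτlt, iht]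
      by_cases hvin : v = a' ∨ v = b'
      · -- this swap has the same token pair as the swap at index k: contradiction
        exfalso
        set q' : Equiv.Perm V := applySeq (σ.take (τ₀ + n)) 1 with hq'
        have hq'v : q'.symm w = v := by
          rw [← show q' v = w from ihv, Equiv.symm_apply_apply]
        have hq't : q'.symm v = t := by
          rw [← show q' t = v from iht, Equiv.symm_apply_apply]
        have hpair' : swappedPair σ ⟨τ₀ + n, hτlt⟩ = s(t, v) := by
          unfold swappedPair
          rcases hvin with h | h
          · have hbw : b' = w := huniq (h ▸ hadj') hwadj
            rw [show ((σ.get ⟨τ₀+n, hτlt⟩).1) = a' from rfl,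
              show ((σ.get ⟨τ₀+n, hτlt⟩).2) = b' from rfl, ← h, hbw]
            rw [show applySeq (σ.take (⟨τ₀+n, hτlt⟩ : Fin σ.length)) 1 = q' from rfl]
            rw [hq'v, hq't]
          · have haw : a' = w := huniq (h ▸ hadj'.symm) hwadj
            rw [show ((σ.get ⟨τ₀+n, hτlt⟩).1) = a' from rfl,
              show ((σ.get ⟨τ₀+n, hτlt⟩).2) = b' from rfl, ← h, haw]
            rw [show applySeq (σ.take (⟨τ₀+n, hτlt⟩ : Fin σ.length)) 1 = q' from rfl]
            rw [hq'v, hq't, Sym2.eq_swap]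
        have hklt' : (⟨k, hklt⟩ : Fin σ.length) < ⟨τ₀ + n, hτlt⟩ := by
          simp only [Fin.mk_lt_mk]; omega
        exact hmin ⟨k, hklt⟩ ⟨τ₀ + n, hτlt⟩ hklt' (hpair.trans hpair'.symm)
      · push_neg at hvin
        have hfixv : Equiv.swap a' b' v = v :=
          Equiv.swap_apply_of_ne_of_ne hvin.1 hvin.2
        refine ⟨?_, by rw [hst, hfixv]⟩
        by_cases hwin : w = a' ∨ w = b'
        · exfalso
          -- token v moves off w to a vertex x adjacent to w, contradicting straying
          set x := Equiv.swap a' b' w with hx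
          have hxw : G.Adj w x := by
            rcases hwin with h | h
            · rw [hx, h, Equiv.swap_apply_left]
              exact hadj'
            · rw [hx, h, Equiv.swap_apply_right]
              exact hadj'.symm
          have hxv : x ≠ v := by
            rcases hwin with h | h
            · rw [hx, h, Equiv.swap_apply_left]
              exact fun hh => hvin.2 hh.symm
            · rw [hx, h, Equiv.swap_apply_right]
              exact fun hh => hvin.1 hh.symm
          have hreach : G.Reachable x v := hxw.symm.reachable.trans hwadj.symm.reachable
          have hsv' : posAt σ v (τ₀ + (n+1)) = x := hsv
          rcases hnear (τ₀ + (n+1)) hle (by rw [hsv']; exact hreach) with h | h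
          · exact hxv (hsv' ▸ h)
          · rw [hsv'] at h
            exact hxw.ne' (huniq h.symm hwadj)
        · push_neg at hwin
          rw [hsv, Equiv.swap_apply_of_ne_of_ne hwin.1 hwin.2]
  have hfinal := key (σ.length - τ₀) (by omega)
  rw [show τ₀ + (σ.length - τ₀) = σ.length by omega] at hfinal
  have : posAt σ v σ.length = v := by
    unfold posAt
    rw [List.take_length, hsol, hv]
  exact hwv (hfinal.1.symm.trans this)


end Straying
end
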